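/- (Theorem 1, quantitative ε-Markov version.) Let Y and X_0, X_1, …, X_n be jointly distributed random variables, with each X_k taking values in a common finite set 𝒳, and suppose the loss function satisfies |L(y,a)| ≤ M for all y and a. If I_{χ²}(Y; X_{k+1} | X_k) ≤ ε² for every k < θ, then 0 ≤ g₁(θ) − H_L(Y|X_θ) ≤ 2Mθε·|𝒳|, where g₁(θ) = H_L(Y|X_0) + Σ_{k=0}^{θ−1} I_L(Y; X_k | X_{k+1}). -/

import Mathlib

set_option linter.unusedSectionVars false
set_option linter.unusedVariables false

open Finset

open Classical in
/-- Probability of an event under a pmf `p` on a finite sample space. -/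
noncomputable def pr {Ω : Type*} [Fintype Ω] (p : Ω → ℝ) (E : Ω → Prop) : ℝ :=
  ∑ ω, if E ω then p ω else 0

/-- Conditional distribution of a random variable `Y` given an event `E`. -/
noncomputable def condDist {Ω 𝒴 : Type*} [Fintype Ω] (p : Ω → ℝ) (Y : Ω → 𝒴)
    (E : Ω → Prop) : 𝒴 → ℝ :=
  fun y => pr p (fun ω => Y ω = y ∧ E ω) / pr p E

/-- Neyman's χ²-divergence `D_{χ²}(P‖Q)`.  (In Lean, `x / 0 = 0`, which realizes
the convention `0²/0 = 0` under absolute continuity.) -/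
noncomputable def chiSqDiv {𝒴 : Type*} [Fintype 𝒴] (P Q : 𝒴 → ℝ) : ℝ :=
  ∑ y, (P y - Q y) ^ 2 / Q y

/-- χ²-conditional mutual information `I_{χ²}(Y;Z|X)`. -/
noncomputable def chiSqCMI {Ω 𝒳 𝒴 𝒵 : Type*} [Fintype Ω] [Fintype 𝒳] [Fintype 𝒴]
    [Fintype 𝒵] (p : Ω → ℝ) (Y : Ω → 𝒴) (Z : Ω → 𝒵) (X : Ω → 𝒳) : ℝ :=
  ∑ x, ∑ z, pr p (fun ω => X ω = x ∧ Z ω = z) *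
    chiSqDiv (condDist p Y (fun ω => X ω = x ∧ Z ω = z))
      (condDist p Y (fun ω => X ω = x))

/-- Expected loss `E_{Y∼P}[L(Y,a)]`. -/
noncomputable def expLoss {𝒴 𝒜 : Type*} [Fintype 𝒴] (L : 𝒴 → 𝒜 → ℝ) (P : 𝒴 → ℝ)
    (a : 𝒜) : ℝ :=
  ∑ y, P y * L y a

/-- The `L`-entropy `H_L(P) = min_{a∈𝒜} E_{Y∼P}[L(Y,a)]`. -/
noncomputable def Lentropy {𝒴 𝒜 : Type*} [Fintype 𝒴] (L : 𝒴 → 𝒜 → ℝ) (P : 𝒴 → ℝ) : ℝ :=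
  ⨅ a : 𝒜, expLoss L P a

/-- The `L`-conditional entropy `H_L(Y|X) = Σ_x P_X(x) H_L(P_{Y|X=x})`. -/
noncomputable def LcondEntropy {Ω 𝒳 𝒴 𝒜 : Type*} [Fintype Ω] [Fintype 𝒳] [Fintype 𝒴]
    (L : 𝒴 → 𝒜 → ℝ) (p : Ω → ℝ) (Y : Ω → 𝒴) (X : Ω → 𝒳) : ℝ :=
  ∑ x, pr p (fun ω => X ω = x) * Lentropy L (condDist p Y (fun ω => X ω = x))

/-- `b` selects, for every probability mass function `P` on `𝒴`, a Bayes action `b P`. -/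
def IsBayesSelector {𝒴 𝒜 : Type*} [Fintype 𝒴] (L : 𝒴 → 𝒜 → ℝ) (b : (𝒴 → ℝ) → 𝒜) : Prop :=
  ∀ P : 𝒴 → ℝ, (∀ y, 0 ≤ P y) → (∑ y, P y) = 1 →
    ∀ a : 𝒜, expLoss L P (b P) ≤ expLoss L P a

/-- The `L`-divergence `D_L(P‖Q) = E_{Y∼P}[L(Y,a_Q)] − E_{Y∼P}[L(Y,a_P)]`
for the choice `a_P = b P`, `a_Q = b Q` of Bayes actions. -/
noncomputable def Ldiv {𝒴 𝒜 : Type*} [Fintype 𝒴] (L : 𝒴 → 𝒜 → ℝ) (b : (𝒴 → ℝ) → 𝒜)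
    (P Q : 𝒴 → ℝ) : ℝ :=
  expLoss L P (b Q) - expLoss L P (b P)

/-- The `L`-conditional mutual information
`I_L(Y;Z|X) = Σ_{x,z} P_{X,Z}(x,z) D_L(P_{Y|X=x,Z=z} ‖ P_{Y|X=x})`. -/
noncomputable def LCMI {Ω 𝒳 𝒴 𝒵 𝒜 : Type*} [Fintype Ω] [Fintype 𝒳] [Fintype 𝒴]
    [Fintype 𝒵] (L : 𝒴 → 𝒜 → ℝ) (b : (𝒴 → ℝ) → 𝒜) (p : Ω → ℝ)
    (Y : Ω → 𝒴) (Z : Ω → 𝒵) (X : Ω → 𝒳) : ℝ :=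
  ∑ x, ∑ z, pr p (fun ω => X ω = x ∧ Z ω = z) *
    Ldiv L b (condDist p Y (fun ω => X ω = x ∧ Z ω = z))
      (condDist p Y (fun ω => X ω = x))

section aux
open Classical
variable {Ω 𝒳 𝒴 𝒵 𝒜 : Type*} [Fintype Ω] [Fintype 𝒳] [Fintype 𝒴] [Fintype 𝒵]
  [Fintype 𝒜] [Nonempty 𝒜]

lemma pr_nonneg {p : Ω → ℝ} (hp : ∀ ω, 0 ≤ p ω) (E : Ω → Prop) : 0 ≤ pr p E := by
  unfold pr
  refine Finset.sum_nonneg fun ω _ => ?_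
  split
  · exact hp ω
  · exact le_rfl

lemma pr_mono {p : Ω → ℝ} (hp : ∀ ω, 0 ≤ p ω) {E F : Ω → Prop}
    (h : ∀ ω, E ω → F ω) : pr p E ≤ pr p F := by
  unfold pr
  refine Finset.sum_le_sum fun ω _ => ?_
  by_cases hE : E ω
  · simp [hE, h ω hE]
  · simp only [hE, if_false]
    split
    · exact hp ω
    · exact le_rfl

lemma pr_congr {p : Ω → ℝ} {E F : Ω → Prop} (h : ∀ ω, E ω ↔ F ω) :
    pr p E = pr p F := by
  unfold pr
  exact Finset.sum_congr rfl fun ω _ => by rw [if_congr (h ω) rfl rfl]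

lemma condDist_congr {p : Ω → ℝ} {Y : Ω → 𝒴} {E F : Ω → Prop}
    (h : ∀ ω, E ω ↔ F ω) : condDist p Y E = condDist p Y F := by
  funext y
  unfold condDist
  rw [pr_congr h, pr_congr (fun ω => and_congr_right fun _ => h ω)]

lemma condDist_nonneg {p : Ω → ℝ} (hp : ∀ ω, 0 ≤ p ω) (Y : Ω → 𝒴) (E : Ω → Prop)
    (y : 𝒴) : 0 ≤ condDist p Y E y :=
  div_nonneg (pr_nonneg hp _) (pr_nonneg hp _)

lemma pr_sum_fiber (p : Ω → ℝ) (f : Ω → 𝒵) (E : Ω → Prop) :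
    ∑ z, pr p (fun ω => E ω ∧ f ω = z) = pr p E := by
  unfold pr
  rw [Finset.sum_comm]
  refine Finset.sum_congr rfl fun ω _ => ?_
  by_cases hE : E ω <;> simp [hE]

lemma pr_sum_val (p : Ω → ℝ) (Y : Ω → 𝒴) (E : Ω → Prop) :
    ∑ y, pr p (fun ω => Y ω = y ∧ E ω) = pr p E := by
  rw [← pr_sum_fiber p Y E]
  exact Finset.sum_congr rfl fun y _ => pr_congr fun ω => and_comm

lemma pr_and_le {p : Ω → ℝ} (hp : ∀ ω, 0 ≤ p ω) (E F : Ω → Prop) :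
    pr p (fun ω => E ω ∧ F ω) ≤ pr p F :=
  pr_mono hp fun ω h => h.2

lemma pr_mul_condDist {p : Ω → ℝ} (hp : ∀ ω, 0 ≤ p ω) (Y : Ω → 𝒴) (E : Ω → Prop)
    (y : 𝒴) : pr p E * condDist p Y E y = pr p (fun ω => Y ω = y ∧ E ω) := by
  by_cases h : pr p E = 0
  · have h2 : pr p (fun ω => Y ω = y ∧ E ω) = 0 :=
      le_antisymm (h ▸ pr_and_le hp _ _) (pr_nonneg hp _)
    rw [h, h2, zero_mul]
  · unfold condDist
    field_simp

lemma condDist_sum {p : Ω → ℝ} {E : Ω → Prop} (Y : Ω → 𝒴) (h : pr p E ≠ 0) :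
    ∑ y, condDist p Y E y = 1 := by
  unfold condDist
  rw [← Finset.sum_div, pr_sum_val, div_self h]

lemma pr_mul_expLoss {p : Ω → ℝ} (hp : ∀ ω, 0 ≤ p ω) (L : 𝒴 → 𝒜 → ℝ) (Y : Ω → 𝒴)
    (E : Ω → Prop) (a : 𝒜) :
    pr p E * expLoss L (condDist p Y E) a
      = ∑ y, pr p (fun ω => Y ω = y ∧ E ω) * L y a := by
  unfold expLoss
  rw [Finset.mul_sum]
  exact Finset.sum_congr rfl fun y _ => by
    rw [← mul_assoc, pr_mul_condDist hp]

lemma Lentropy_eq {L : 𝒴 → 𝒜 → ℝ}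
    {b : (𝒴 → ℝ) → 𝒜} (hb : IsBayesSelector L b) {P : 𝒴 → ℝ}
    (h0 : ∀ y, 0 ≤ P y) (h1 : ∑ y, P y = 1) :
    Lentropy L P = expLoss L P (b P) := by
  refine le_antisymm (ciInf_le (Finite.bddBelow_range _) _) (le_ciInf fun a => hb P h0 h1 a)

/-- The conditional entropy given the pair event. -/
noncomputable def pairH (L : 𝒴 → 𝒜 → ℝ) (b : (𝒴 → ℝ) → 𝒜) (p : Ω → ℝ)
    (Y : Ω → 𝒴) (X : Ω → 𝒳) (Z : Ω → 𝒵) : ℝ :=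
  ∑ x, ∑ z, pr p (fun ω => X ω = x ∧ Z ω = z) *
    expLoss L (condDist p Y (fun ω => X ω = x ∧ Z ω = z))
      (b (condDist p Y (fun ω => X ω = x ∧ Z ω = z)))

lemma pairH_symm (L : 𝒴 → 𝒜 → ℝ) (b : (𝒴 → ℝ) → 𝒜) (p : Ω → ℝ)
    (Y : Ω → 𝒴) (X : Ω → 𝒳) (Z : Ω → 𝒵) :
    pairH L b p Y X Z = pairH L b p Y Z X := by
  unfold pairH
  rw [Finset.sum_comm]
  refine Finset.sum_congr rfl fun z _ => Finset.sum_congr rfl fun x _ => ?_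
  rw [pr_congr (fun ω => and_comm),
    condDist_congr (p := p) (Y := Y) (E := fun ω => X ω = x ∧ Z ω = z)
      (F := fun ω => Z ω = z ∧ X ω = x) (fun ω => and_comm)]

lemma LCMI_eq (L : 𝒴 → 𝒜 → ℝ)
    {b : (𝒴 → ℝ) → 𝒜} (hb : IsBayesSelector L b) {p : Ω → ℝ} (hp : ∀ ω, 0 ≤ p ω)
    (Y : Ω → 𝒴) (Z : Ω → 𝒵) (X : Ω → 𝒳) :
    LCMI L b p Y Z X = LcondEntropy L p Y X - pairH L b p Y X Z := by
  unfold LCMI pairH Ldiv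
  rw [eq_sub_iff_add_eq, ← Finset.sum_add_distrib]
  have step : ∀ x : 𝒳,
      (∑ z, pr p (fun ω => X ω = x ∧ Z ω = z) *
        (expLoss L (condDist p Y (fun ω => X ω = x ∧ Z ω = z))
            (b (condDist p Y (fun ω => X ω = x)))
          - expLoss L (condDist p Y (fun ω => X ω = x ∧ Z ω = z))
            (b (condDist p Y (fun ω => X ω = x ∧ Z ω = z)))))
      + ∑ z, pr p (fun ω => X ω = x ∧ Z ω = z) *
          expLoss L (condDist p Y (fun ω => X ω = x ∧ Z ω = z))
            (b (condDist p Y (fun ω => X ω = x ∧ Z ω = z)))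
      = pr p (fun ω => X ω = x) * Lentropy L (condDist p Y (fun ω => X ω = x)) := by
    intro x
    have collapse : ∀ a : 𝒜,
        ∑ z, pr p (fun ω => X ω = x ∧ Z ω = z) *
          expLoss L (condDist p Y (fun ω => X ω = x ∧ Z ω = z)) a
        = pr p (fun ω => X ω = x) * expLoss L (condDist p Y (fun ω => X ω = x)) a := by
      intro a
      rw [pr_mul_expLoss hp]
      have : ∀ z, pr p (fun ω => X ω = x ∧ Z ω = z) *
          expLoss L (condDist p Y (fun ω => X ω = x ∧ Z ω = z)) a
          = ∑ y, pr p (fun ω => (Y ω = y ∧ X ω = x) ∧ Z ω = z) * L y a := by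
        intro z
        rw [pr_mul_expLoss hp]
        exact Finset.sum_congr rfl fun y _ => by
          rw [pr_congr (E := fun ω => Y ω = y ∧ X ω = x ∧ Z ω = z)
            (F := fun ω => (Y ω = y ∧ X ω = x) ∧ Z ω = z) (fun ω => and_assoc.symm)]
      simp_rw [this]
      rw [Finset.sum_comm]
      refine Finset.sum_congr rfl fun y _ => ?_
      rw [← Finset.sum_mul, pr_sum_fiber]
    rw [← Finset.sum_add_distrib]
    simp_rw [mul_sub, sub_add_cancel]
    rw [collapse]
    by_cases hx : pr p (fun ω => X ω = x) = 0
    · rw [hx, zero_mul, zero_mul]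
    · congr 1
      rw [Lentropy_eq hb (condDist_nonneg hp Y _) (condDist_sum Y hx)]
  rw [Finset.sum_congr rfl fun x _ => step x]
  rfl

lemma LCMI_nonneg (L : 𝒴 → 𝒜 → ℝ)
    {b : (𝒴 → ℝ) → 𝒜} (hb : IsBayesSelector L b) {p : Ω → ℝ} (hp : ∀ ω, 0 ≤ p ω)
    (Y : Ω → 𝒴) (Z : Ω → 𝒵) (X : Ω → 𝒳) :
    0 ≤ LCMI L b p Y Z X := by
  unfold LCMI
  refine Finset.sum_nonneg fun x _ => Finset.sum_nonneg fun z _ => ?_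
  by_cases h : pr p (fun ω => X ω = x ∧ Z ω = z) = 0
  · rw [h, zero_mul]
  · refine mul_nonneg (pr_nonneg hp _) ?_
    unfold Ldiv
    rw [sub_nonneg]
    exact hb _ (condDist_nonneg hp Y _) (condDist_sum Y h) _

lemma chiSqDiv_nonneg {P Q : 𝒴 → ℝ} (hQ : ∀ y, 0 ≤ Q y) : 0 ≤ chiSqDiv P Q :=
  Finset.sum_nonneg fun y _ => div_nonneg (sq_nonneg _) (hQ y)

lemma abs_sum_le_sqrt_chiSq {P Q : 𝒴 → ℝ} (hQ : ∀ y, 0 ≤ Q y) (hQ1 : ∑ y, Q y = 1)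
    (hac : ∀ y, Q y = 0 → P y = 0) :
    ∑ y, |P y - Q y| ≤ Real.sqrt (chiSqDiv P Q) := by
  have key : (∑ y, |P y - Q y|) ^ 2 ≤ (∑ y, Q y) * chiSqDiv P Q := by
    have h1 : ∑ y, |P y - Q y|
        = ∑ y, Real.sqrt (Q y) * (|P y - Q y| / Real.sqrt (Q y)) := by
      refine Finset.sum_congr rfl fun y _ => ?_
      by_cases h : Q y = 0
      · simp [h, hac y h]
      · rw [mul_div_cancel₀]
        exact Real.sqrt_ne_zero'.mpr (lt_of_le_of_ne (hQ y) (Ne.symm h))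
    have h2 : ∑ y, Real.sqrt (Q y) ^ 2 = ∑ y, Q y :=
      Finset.sum_congr rfl fun y _ => Real.sq_sqrt (hQ y)
    have h3 : ∑ y, (|P y - Q y| / Real.sqrt (Q y)) ^ 2 = chiSqDiv P Q := by
      unfold chiSqDiv
      refine Finset.sum_congr rfl fun y _ => ?_
      rw [div_pow, sq_abs, Real.sq_sqrt (hQ y)]
    calc (∑ y, |P y - Q y|) ^ 2
        = (∑ y, Real.sqrt (Q y) * (|P y - Q y| / Real.sqrt (Q y))) ^ 2 := by rw [h1]
      _ ≤ (∑ y, Real.sqrt (Q y) ^ 2) * ∑ y, (|P y - Q y| / Real.sqrt (Q y)) ^ 2 :=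
          Finset.sum_mul_sq_le_sq_mul_sq _ _ _
      _ = (∑ y, Q y) * chiSqDiv P Q := by rw [h2, h3]
  rw [hQ1, one_mul] at key
  have h0 : 0 ≤ ∑ y, |P y - Q y| := Finset.sum_nonneg fun y _ => abs_nonneg _
  calc ∑ y, |P y - Q y| = Real.sqrt ((∑ y, |P y - Q y|) ^ 2) := (Real.sqrt_sq h0).symm
    _ ≤ Real.sqrt (chiSqDiv P Q) := Real.sqrt_le_sqrt key

lemma Ldiv_le {L : 𝒴 → 𝒜 → ℝ} {M : ℝ}
    (hL : ∀ y a, |L y a| ≤ M) {b : (𝒴 → ℝ) → 𝒜} (hb : IsBayesSelector L b)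
    {P Q : 𝒴 → ℝ} (hP0 : ∀ y, 0 ≤ P y) (hP1 : ∑ y, P y = 1)
    (hQ0 : ∀ y, 0 ≤ Q y) (hQ1 : ∑ y, Q y = 1) (hac : ∀ y, Q y = 0 → P y = 0) :
    Ldiv L b P Q ≤ 2 * M * Real.sqrt (chiSqDiv P Q) := by
  have hQopt : expLoss L Q (b Q) - expLoss L Q (b P) ≤ 0 :=
    sub_nonpos.mpr (hb Q hQ0 hQ1 (b P))
  have step1 : Ldiv L b P Q ≤ ∑ y, (P y - Q y) * (L y (b Q) - L y (b P)) := by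
    unfold Ldiv expLoss
    have expand : ∑ y, (P y - Q y) * (L y (b Q) - L y (b P))
        = (∑ y, P y * L y (b Q) - ∑ y, P y * L y (b P))
          - (∑ y, Q y * L y (b Q) - ∑ y, Q y * L y (b P)) := by
      rw [← Finset.sum_sub_distrib, ← Finset.sum_sub_distrib, ← Finset.sum_sub_distrib]
      exact Finset.sum_congr rfl fun y _ => by ring
    rw [expand]
    have := hQopt
    unfold expLoss at this
    linarith
  have step2 : ∑ y, (P y - Q y) * (L y (b Q) - L y (b P))
      ≤ 2 * M * ∑ y, |P y - Q y| := by
    rw [Finset.mul_sum]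
    refine Finset.sum_le_sum fun y _ => ?_
    calc (P y - Q y) * (L y (b Q) - L y (b P))
        ≤ |(P y - Q y) * (L y (b Q) - L y (b P))| := le_abs_self _
      _ = |P y - Q y| * |L y (b Q) - L y (b P)| := abs_mul _ _
      _ ≤ |P y - Q y| * (2 * M) := by
          refine mul_le_mul_of_nonneg_left ?_ (abs_nonneg _)
          calc |L y (b Q) - L y (b P)| ≤ |L y (b Q)| + |L y (b P)| := abs_sub _ _
            _ ≤ 2 * M := by have := hL y (b Q); have := hL y (b P); linarith
      _ = 2 * M * |P y - Q y| := by ring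
  have hM : 0 ≤ 2 * M := by
    rcases isEmpty_or_nonempty 𝒴 with h | h
    · exfalso; rw [Finset.univ_eq_empty, Finset.sum_empty] at hP1; exact one_ne_zero hP1.symm
    · obtain ⟨y⟩ := h
      obtain ⟨a⟩ := (inferInstance : Nonempty 𝒜)
      have := hL y a
      have := abs_nonneg (L y a)
      linarith
  calc Ldiv L b P Q ≤ 2 * M * ∑ y, |P y - Q y| := step1.trans step2
    _ ≤ 2 * M * Real.sqrt (chiSqDiv P Q) :=
        mul_le_mul_of_nonneg_left (abs_sum_le_sqrt_chiSq hQ0 hQ1 hac) hM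

lemma pr_pair_total {p : Ω → ℝ} (hsum : ∑ ω, p ω = 1) (X : Ω → 𝒳) (Z : Ω → 𝒵) :
    ∑ x, ∑ z, pr p (fun ω => X ω = x ∧ Z ω = z) = 1 := by
  have h1 : ∀ x, ∑ z, pr p (fun ω => X ω = x ∧ Z ω = z) = pr p (fun ω => X ω = x) :=
    fun x => pr_sum_fiber p Z _
  simp_rw [h1]
  unfold pr
  rw [Finset.sum_comm, ← hsum]
  exact Finset.sum_congr rfl fun ω _ => by simp

lemma LCMI_le_of_chiSq {L : 𝒴 → 𝒜 → ℝ}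
    {M : ℝ} (hL : ∀ y a, |L y a| ≤ M) (hM : 0 ≤ M)
    {b : (𝒴 → ℝ) → 𝒜} (hb : IsBayesSelector L b)
    {p : Ω → ℝ} (hp : ∀ ω, 0 ≤ p ω) (hsum : ∑ ω, p ω = 1)
    (Y : Ω → 𝒴) (Z : Ω → 𝒵) (X : Ω → 𝒳) {ε : ℝ} (hε : 0 ≤ ε)
    (hchi : chiSqCMI p Y Z X ≤ ε ^ 2) :
    LCMI L b p Y Z X ≤ 2 * M * ε := by
  set w := fun x z => pr p (fun ω => X ω = x ∧ Z ω = z) with hw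
  set chi := fun x z => chiSqDiv (condDist p Y (fun ω => X ω = x ∧ Z ω = z))
      (condDist p Y (fun ω => X ω = x)) with hchidef
  have hw0 : ∀ x z, 0 ≤ w x z := fun x z => pr_nonneg hp _
  have hchi0 : ∀ x z, 0 ≤ chi x z := fun x z =>
    chiSqDiv_nonneg (condDist_nonneg hp Y _)
  have termbound : ∀ x z, w x z * Ldiv L b
      (condDist p Y (fun ω => X ω = x ∧ Z ω = z))
      (condDist p Y (fun ω => X ω = x))
      ≤ w x z * (2 * M * Real.sqrt (chi x z)) := by
    intro x z
    by_cases h : w x z = 0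
    · rw [h, zero_mul, zero_mul]
    · refine mul_le_mul_of_nonneg_left ?_ (hw0 x z)
      have hxz : pr p (fun ω => X ω = x ∧ Z ω = z) ≠ 0 := h
      have hxle : pr p (fun ω => X ω = x ∧ Z ω = z) ≤ pr p (fun ω => X ω = x) :=
        pr_mono hp fun ω h => h.1
      have hx : pr p (fun ω => X ω = x) ≠ 0 := by
        intro h0
        exact hxz (le_antisymm (h0 ▸ hxle) (pr_nonneg hp _))
      refine Ldiv_le hL hb (condDist_nonneg hp Y _) (condDist_sum Y hxz)
        (condDist_nonneg hp Y _) (condDist_sum Y hx) ?_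
      intro y hy
      unfold condDist at hy ⊢
      have hnum : pr p (fun ω => Y ω = y ∧ X ω = x) = 0 :=
        (div_eq_zero_iff.mp hy).resolve_right hx
      have : pr p (fun ω => Y ω = y ∧ X ω = x ∧ Z ω = z) = 0 := by
        refine le_antisymm ?_ (pr_nonneg hp _)
        calc pr p (fun ω => Y ω = y ∧ X ω = x ∧ Z ω = z)
            ≤ pr p (fun ω => Y ω = y ∧ X ω = x) :=
              pr_mono hp fun ω h => ⟨h.1, h.2.1⟩
          _ = 0 := hnum
      rw [this, zero_div]
  have sum_sqrt : ∑ x, ∑ z, w x z * Real.sqrt (chi x z) ≤ ε := by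
    have cauchy : (∑ x, ∑ z, w x z * Real.sqrt (chi x z)) ^ 2
        ≤ (∑ x, ∑ z, w x z) * (∑ x, ∑ z, w x z * chi x z) := by
      have rewr : ∀ x z, w x z * Real.sqrt (chi x z)
          = Real.sqrt (w x z) * Real.sqrt (w x z * chi x z) := by
        intro x z
        rw [Real.sqrt_mul (hw0 x z), ← mul_assoc, Real.mul_self_sqrt (hw0 x z)]
      simp_rw [rewr]
      have conv1 : (∑ x, ∑ z, Real.sqrt (w x z) * Real.sqrt (w x z * chi x z))
          = ∑ q : 𝒳 × 𝒵, Real.sqrt (w q.1 q.2) * Real.sqrt (w q.1 q.2 * chi q.1 q.2) :=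
        (Fintype.sum_prod_type
          (f := fun q : 𝒳 × 𝒵 => Real.sqrt (w q.1 q.2) * Real.sqrt (w q.1 q.2 * chi q.1 q.2))).symm
      have conv2 : (∑ x, ∑ z, w x z) = ∑ q : 𝒳 × 𝒵, w q.1 q.2 :=
        (Fintype.sum_prod_type (f := fun q : 𝒳 × 𝒵 => w q.1 q.2)).symm
      have conv3 : (∑ x, ∑ z, w x z * chi x z) = ∑ q : 𝒳 × 𝒵, w q.1 q.2 * chi q.1 q.2 :=
        (Fintype.sum_prod_type (f := fun q : 𝒳 × 𝒵 => w q.1 q.2 * chi q.1 q.2)).symm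
      rw [conv1, conv2, conv3]
      have cs := Finset.sum_mul_sq_le_sq_mul_sq (Finset.univ : Finset (𝒳 × 𝒵))
        (fun q => Real.sqrt (w q.1 q.2)) (fun q => Real.sqrt (w q.1 q.2 * chi q.1 q.2))
      have e1 : ∑ q : 𝒳 × 𝒵, Real.sqrt (w q.1 q.2) ^ 2 = ∑ q : 𝒳 × 𝒵, w q.1 q.2 :=
        Finset.sum_congr rfl fun q _ => Real.sq_sqrt (hw0 q.1 q.2)
      have e2 : ∑ q : 𝒳 × 𝒵, Real.sqrt (w q.1 q.2 * chi q.1 q.2) ^ 2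
          = ∑ q : 𝒳 × 𝒵, w q.1 q.2 * chi q.1 q.2 :=
        Finset.sum_congr rfl fun q _ =>
          Real.sq_sqrt (mul_nonneg (hw0 q.1 q.2) (hchi0 q.1 q.2))
      rw [e1, e2] at cs
      exact cs
    have htot : ∑ x, ∑ z, w x z = 1 := pr_pair_total hsum X Z
    rw [htot, one_mul] at cauchy
    have hCMI : ∑ x, ∑ z, w x z * chi x z = chiSqCMI p Y Z X := rfl
    rw [hCMI] at cauchy
    have h0 : 0 ≤ ∑ x, ∑ z, w x z * Real.sqrt (chi x z) :=
      Finset.sum_nonneg fun x _ => Finset.sum_nonneg fun z _ =>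
        mul_nonneg (hw0 x z) (Real.sqrt_nonneg _)
    nlinarith [cauchy, hchi, h0, hε]
  calc LCMI L b p Y Z X
      ≤ ∑ x, ∑ z, w x z * (2 * M * Real.sqrt (chi x z)) :=
        Finset.sum_le_sum fun x _ => Finset.sum_le_sum fun z _ => termbound x z
    _ = 2 * M * ∑ x, ∑ z, w x z * Real.sqrt (chi x z) := by
        rw [Finset.mul_sum]
        refine Finset.sum_congr rfl fun x _ => ?_
        rw [Finset.mul_sum]
        exact Finset.sum_congr rfl fun z _ => by ring
    _ ≤ 2 * M * ε := by
        refine mul_le_mul_of_nonneg_left sum_sqrt (by linarith)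

end aux


/-- Theorem 1, quantitative ε-Markov version.  If
`I_{χ²}(Y;X_{k+1}|X_k) ≤ ε²` for every `k < θ`, then
`0 ≤ g₁(θ) − H_L(Y|X_θ) ≤ 2Mθε|𝒳|` where
`g₁(θ) = H_L(Y|X_0) + Σ_{k<θ} I_L(Y;X_k|X_{k+1})`. -/
theorem condEntropy_epsMarkov_approx {Ω 𝒳 𝒴 𝒜 : Type*} [Fintype Ω] [Fintype 𝒳]
    [Fintype 𝒴] [Fintype 𝒜] [Nonempty 𝒜]
    (L : 𝒴 → 𝒜 → ℝ) (M : ℝ) (hL : ∀ y a, |L y a| ≤ M)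
    (b : (𝒴 → ℝ) → 𝒜) (hb : IsBayesSelector L b)
    (p : Ω → ℝ) (hp : ∀ ω, 0 ≤ p ω) (hsum : ∑ ω, p ω = 1)
    (Y : Ω → 𝒴) (X : ℕ → Ω → 𝒳) (n : ℕ)
    (ε : ℝ) (hε : 0 ≤ ε) (θ : ℕ) (hθ : θ ≤ n)
    (hMarkov : ∀ k < θ, chiSqCMI p Y (X (k + 1)) (X k) ≤ ε ^ 2) :
    0 ≤ (LcondEntropy L p Y (X 0)
          + ∑ k ∈ Finset.range θ, LCMI L b p Y (X k) (X (k + 1)))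
        - LcondEntropy L p Y (X θ)
    ∧ (LcondEntropy L p Y (X 0)
          + ∑ k ∈ Finset.range θ, LCMI L b p Y (X k) (X (k + 1)))
        - LcondEntropy L p Y (X θ)
      ≤ 2 * M * (θ : ℝ) * ε * (Fintype.card 𝒳 : ℝ) := by
    classical
  have hΩ : Nonempty Ω := by
    by_contra h
    rw [not_nonempty_iff] at h
    rw [Finset.univ_eq_empty, Finset.sum_empty] at hsum
    exact one_ne_zero hsum.symm
  obtain ⟨ω₀⟩ := hΩ
  have h𝒳 : 0 < Fintype.card 𝒳 := Fintype.card_pos_iff.mpr ⟨X 0 ω₀⟩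
  have hM : 0 ≤ M := (abs_nonneg _).trans (hL (Y ω₀) (Classical.arbitrary 𝒜))
  set Hk : ℕ → ℝ := fun k => LcondEntropy L p Y (X k) with hHk
  set PHk : ℕ → ℝ := fun k => pairH L b p Y (X k) (X (k + 1)) with hPHk
  have e1 : ∑ k ∈ Finset.range θ, LCMI L b p Y (X k) (X (k + 1))
      = ∑ k ∈ Finset.range θ, (Hk (k + 1) - PHk k) := by
    refine Finset.sum_congr rfl fun k _ => ?_
    rw [LCMI_eq L hb hp Y (X k) (X (k + 1)), pairH_symm]
  have e2 : ∑ k ∈ Finset.range θ, LCMI L b p Y (X (k + 1)) (X k)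
      = ∑ k ∈ Finset.range θ, (Hk k - PHk k) := by
    refine Finset.sum_congr rfl fun k _ => ?_
    rw [LCMI_eq L hb hp Y (X (k + 1)) (X k)]
  have tele : ∑ k ∈ Finset.range θ, (Hk (k + 1) - Hk k) = Hk θ - Hk 0 :=
    Finset.sum_range_sub Hk θ
  have decomp : (LcondEntropy L p Y (X 0)
        + ∑ k ∈ Finset.range θ, LCMI L b p Y (X k) (X (k + 1)))
        - LcondEntropy L p Y (X θ)
      = ∑ k ∈ Finset.range θ, LCMI L b p Y (X (k + 1)) (X k) := by
    rw [e1, e2]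
    have d1 : ∑ k ∈ Finset.range θ, (Hk (k + 1) - PHk k)
        = (∑ k ∈ Finset.range θ, Hk (k + 1)) - ∑ k ∈ Finset.range θ, PHk k :=
      Finset.sum_sub_distrib _ _
    have d2 : ∑ k ∈ Finset.range θ, (Hk k - PHk k)
        = (∑ k ∈ Finset.range θ, Hk k) - ∑ k ∈ Finset.range θ, PHk k :=
      Finset.sum_sub_distrib _ _
    have d3 : ∑ k ∈ Finset.range θ, (Hk (k + 1) - Hk k)
        = (∑ k ∈ Finset.range θ, Hk (k + 1)) - ∑ k ∈ Finset.range θ, Hk k :=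
      Finset.sum_sub_distrib _ _
    rw [d3] at tele
    rw [d1, d2]
    show Hk 0 + _ - Hk θ = _
    linarith
  rw [decomp]
  constructor
  · exact Finset.sum_nonneg fun k _ => LCMI_nonneg L hb hp Y (X (k + 1)) (X k)
  · have hbound : ∑ k ∈ Finset.range θ, LCMI L b p Y (X (k + 1)) (X k)
        ≤ (θ : ℝ) * (2 * M * ε) := by
      calc ∑ k ∈ Finset.range θ, LCMI L b p Y (X (k + 1)) (X k)
          ≤ ∑ _k ∈ Finset.range θ, (2 * M * ε) :=
            Finset.sum_le_sum fun k hk =>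
              LCMI_le_of_chiSq hL hM hb hp hsum Y (X (k + 1)) (X k) hε
                (hMarkov k (Finset.mem_range.mp hk))
        _ = (θ : ℝ) * (2 * M * ε) := by
            rw [Finset.sum_const, Finset.card_range, nsmul_eq_mul]
    refine hbound.trans ?_
    have hc : (1 : ℝ) ≤ (Fintype.card 𝒳 : ℝ) := by exact_mod_cast h𝒳
    have hθ0 : (0 : ℝ) ≤ (θ : ℝ) := Nat.cast_nonneg θ
    nlinarith [mul_nonneg (mul_nonneg hM hε) hθ0]
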